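/- Cyclic hashing restricted to L−n+1 bits is uniform: let h₁ : Σ → GF(2)[x]/(x^L+1) be uniformly random, let q₁(x),…,q_n(x) be polynomials of degree < n, not all zero, and fix n−1 consecutive (mod L) coefficient positions. Then for any y, P(Σᵢ qᵢ(x) h₁(aᵢ) ≡ y on the remaining L−n+1 positions) = 2^{-(L-n+1)}, where a₁,…,a_n are distinct symbols. -/

import Mathlib

/-- Uniform probability of an event over a finite sample space. -/
noncomputable def prob (Ω : Type*) (p : Ω → Prop) : ℚ :=
  (Nat.card {ω : Ω // p ω} : ℚ) / (Nat.card Ω : ℚ)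

open Polynomial


private def fiberEquiv {G H : Type*} [AddCommGroup G] [AddCommGroup H]
    (φ : G →+ H) {b : H} {g₀ : G} (hg₀ : φ g₀ = b) :
    {g // φ g = b} ≃ {g // φ g = 0} where
  toFun x := ⟨x.1 - g₀, by rw [map_sub, x.2, hg₀, sub_self]⟩
  invFun x := ⟨x.1 + g₀, by rw [map_add, x.2, hg₀, zero_add]⟩
  left_inv x := by ext1; simp
  right_inv x := by ext1; simp

private lemma card_decomp {G H : Type*} [Fintype G] [Fintype H] [DecidableEq H]
    (φ : G → H) : Fintype.card G = ∑ b : H, Fintype.card {g // φ g = b} := by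
  rw [← Fintype.card_sigma]
  exact (Fintype.card_congr (Equiv.sigmaFiberEquiv φ)).symm

private lemma surj_of_card_le {G H : Type*} [AddCommGroup G] [AddCommGroup H]
    [Finite G] [Finite H] (φ : G →+ H)
    (hle : Nat.card {g // φ g = (0:H)} * Nat.card H ≤ Nat.card G) :
    Function.Surjective φ := by
  classical
  cases nonempty_fintype G
  cases nonempty_fintype H
  simp only [Nat.card_eq_fintype_card] at hle
  by_contra hns
  unfold Function.Surjective at hns
  push_neg at hns
  obtain ⟨b₀, hb₀⟩ := hns
  have hdec := card_decomp φ
  have hfib : ∀ b : H, Fintype.card {g // φ g = b} ≤ Fintype.card {g // φ g = (0:H)} := by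
    intro b
    rcases em (∃ g, φ g = b) with ⟨g₀, hg₀⟩ | hb
    · exact (Fintype.card_congr (fiberEquiv φ hg₀)).le
    · push_neg at hb
      have : Fintype.card {g // φ g = b} = 0 := by
        rw [Fintype.card_eq_zero_iff]
        exact ⟨fun x => (hb x.1 x.2)⟩
      omega
  have hker_pos : 0 < Fintype.card {g // φ g = (0:H)} :=
    Fintype.card_pos_iff.mpr ⟨⟨0, map_zero φ⟩⟩
  have hb₀0 : Fintype.card {g // φ g = b₀} = 0 := by
    rw [Fintype.card_eq_zero_iff]
    exact ⟨fun x => hb₀ x.1 x.2⟩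
  have hsum : ∑ b ∈ Finset.univ.erase b₀, Fintype.card {g // φ g = b}
      = ∑ b : H, Fintype.card {g // φ g = b} :=
    Finset.sum_erase _ hb₀0
  have hbound : ∑ b ∈ Finset.univ.erase b₀, Fintype.card {g // φ g = b}
      ≤ (Finset.univ.erase b₀).card * Fintype.card {g // φ g = (0:H)} := by
    calc ∑ b ∈ Finset.univ.erase b₀, Fintype.card {g // φ g = b}
        ≤ ∑ _b ∈ Finset.univ.erase b₀, Fintype.card {g // φ g = (0:H)} :=
          Finset.sum_le_sum (fun b _ => hfib b)
      _ = (Finset.univ.erase b₀).card * Fintype.card {g // φ g = (0:H)} := by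
          rw [Finset.sum_const, smul_eq_mul]
  have hcard_erase : (Finset.univ.erase b₀).card = Fintype.card H - 1 := by
    rw [Finset.card_erase_of_mem (Finset.mem_univ _), Finset.card_univ]
  have hG_pos : 0 < Fintype.card G := Fintype.card_pos_iff.mpr ⟨0⟩
  rw [hcard_erase] at hbound
  rw [hsum, ← hdec] at hbound
  have hsub : (Fintype.card H - 1) * Fintype.card {g // φ g = (0:H)}
      = Fintype.card H * Fintype.card {g // φ g = (0:H)}
        - Fintype.card {g // φ g = (0:H)} := by
    rw [Nat.sub_one_mul]
  rw [mul_comm] at hle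
  omega

private lemma card_fiber_of_surj {G H : Type*} [AddCommGroup G] [AddCommGroup H]
    [Finite G] [Finite H] (φ : G →+ H) (hs : Function.Surjective φ) (b : H) :
    Nat.card {g // φ g = b} * Nat.card H = Nat.card G := by
  classical
  cases nonempty_fintype G
  cases nonempty_fintype H
  simp only [Nat.card_eq_fintype_card]
  have hdec := card_decomp φ
  have heq : ∀ b' : H, Fintype.card {g // φ g = b'} = Fintype.card {g // φ g = b} := by
    intro b'
    obtain ⟨g₁, hg₁⟩ := hs b'
    obtain ⟨g₂, hg₂⟩ := hs b
    exact Fintype.card_congr ((fiberEquiv φ hg₁).trans (fiberEquiv φ hg₂).symm)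
  rw [hdec, Finset.sum_congr rfl (fun b' _ => heq b'), Finset.sum_const, smul_eq_mul,
    Finset.card_univ, mul_comm]

private lemma one_plus_one_eq_zero : (1 + 1 : Polynomial (ZMod 2)) = 0 := by
  have h : ((1 : ZMod 2) + 1) = 0 := rfl
  rw [← Polynomial.C_1, ← Polynomial.C_add, h, Polynomial.C_0]

private lemma xpow_add_one_eq_sub (L : ℕ) :
    (X ^ L + 1 : Polynomial (ZMod 2)) = X ^ L - 1 := by
  rw [sub_eq_add_neg]
  congr 1
  rw [eq_neg_iff_add_eq_zero, one_plus_one_eq_zero]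

private lemma f_dvd_pow_sub (L a : ℕ) :
    (X ^ L + 1 : Polynomial (ZMod 2)) ∣ X ^ a - X ^ (a % L) := by
  have h1 : (X ^ L + 1 : Polynomial (ZMod 2)) ∣ (X ^ L) ^ (a / L) - 1 := by
    rw [xpow_add_one_eq_sub]
    simpa using sub_dvd_pow_sub_pow (X ^ L : Polynomial (ZMod 2)) 1 (a / L)
  have h2 : (X ^ a - X ^ (a % L) : Polynomial (ZMod 2))
      = ((X ^ L) ^ (a / L) - 1) * X ^ (a % L) := by
    rw [sub_mul, one_mul, ← pow_mul, ← pow_add, Nat.div_add_mod]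
  rw [h2]
  exact h1.mul_right _

private lemma degree_div_lt' {b v : Polynomial (ZMod 2)} (hb : b ≠ 0) (hdvd : b ∣ v)
    {m : ℕ} (hv : v.degree < ((m + b.natDegree : ℕ) : WithBot ℕ)) :
    (v / b).degree < (m : WithBot ℕ) := by
  rcases eq_or_ne (v / b) 0 with h0 | h0
  · rw [h0, degree_zero]
    exact WithBot.bot_lt_coe m
  · have hveq : b * (v / b) = v := EuclideanDomain.mul_div_cancel' hb hdvd
    have hv0 : v ≠ 0 := by rw [← hveq]; exact mul_ne_zero hb h0
    rw [← natDegree_lt_iff_degree_lt h0]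
    have hvlt : v.natDegree < m + b.natDegree := (natDegree_lt_iff_degree_lt hv0).mpr hv
    rw [← hveq, natDegree_mul hb h0] at hvlt
    omega

private noncomputable def degLTEquiv (m : ℕ) :
    {p : Polynomial (ZMod 2) // p.degree < (m : WithBot ℕ)} ≃ (Fin m → ZMod 2) :=
  (Equiv.subtypeEquivRight (fun _ => Polynomial.mem_degreeLT.symm)).trans
    (Polynomial.degreeLTEquiv (ZMod 2) m).toEquiv

private lemma card_degLT (m : ℕ) :
    Nat.card {p : Polynomial (ZMod 2) // p.degree < (m : WithBot ℕ)} = 2 ^ m := by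
  rw [Nat.card_congr (degLTEquiv m), Nat.card_eq_fintype_card]
  simp

private lemma finite_degLT (m : ℕ) :
    Finite {p : Polynomial (ZMod 2) // p.degree < (m : WithBot ℕ)} :=
  Finite.of_equiv _ (degLTEquiv m).symm

private lemma mod_window_inj {n L s : ℕ} (hnL : n ≤ L) (hn : 1 ≤ n)
    {t₁ t₂ : ℕ} (h₁ : t₁ < n - 1) (h₂ : t₂ < n - 1)
    (h : (s + t₁) % L = (s + t₂) % L) : t₁ = t₂ := by
  have hmod : t₁ % L = t₂ % L := Nat.ModEq.add_left_cancel' s h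
  rw [Nat.mod_eq_of_lt (by omega), Nat.mod_eq_of_lt (by omega)] at hmod
  exact hmod

private lemma ker_card_le (n L s : ℕ) (hnL : n ≤ L) (hn : 1 ≤ n)
    (c : Polynomial (ZMod 2)) (hc : c ≠ 0) (hcdeg : c.degree < (n : WithBot ℕ)) :
    Nat.card {w : Polynomial (ZMod 2) // w.degree < (L : WithBot ℕ) ∧
      ∀ k < L, (∀ t < n - 1, k ≠ (s + t) % L) →
        ((c * w) %ₘ (X ^ L + 1)).coeff k = 0} ≤ 2 ^ (n - 1) := by
  classical
  have hL : 1 ≤ L := hn.trans hnL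
  set f : Polynomial (ZMod 2) := X ^ L + 1 with hfdef
  have hfm : f.Monic := monic_X_pow_add (by rw [degree_one]; exact_mod_cast hL)
  have hfd : f.degree = (L : WithBot ℕ) := by
    rw [hfdef, ← C_1, degree_X_pow_add_C hL]
  have hfnd : f.natDegree = L := natDegree_eq_of_degree_eq_some hfd
  have hf0 : f ≠ 0 := hfm.ne_zero
  set g : Polynomial (ZMod 2) := EuclideanDomain.gcd c f with hgdef
  set d : ℕ := g.natDegree with hddef
  set e : Polynomial (ZMod 2) := f / g with hedef
  have hgc : g ∣ c := EuclideanDomain.gcd_dvd_left c f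
  have hgf : g ∣ f := EuclideanDomain.gcd_dvd_right c f
  have hg0 : g ≠ 0 := by
    intro h
    exact hc (((EuclideanDomain.gcd_eq_zero_iff).mp h).1)
  have hfe : g * e = f := EuclideanDomain.mul_div_cancel' hg0 hgf
  have he0 : e ≠ 0 := by
    intro h
    rw [h, mul_zero] at hfe
    exact hf0 hfe.symm
  have hcn : c.natDegree < n := (natDegree_lt_iff_degree_lt hc).mpr hcdeg
  have hd_le : d ≤ n - 1 := by
    have := natDegree_le_of_dvd hgc hc
    omega
  have hd_leL : d ≤ L := by
    have := natDegree_le_of_dvd hgf hf0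
    omega
  have hend : e.natDegree = L - d := by
    have h1 : (g * e).natDegree = g.natDegree + e.natDegree := natDegree_mul hg0 he0
    rw [hfe, hfnd] at h1
    omega
  have hcg : g * (c / g) = c := EuclideanDomain.mul_div_cancel' hg0 hgc
  have hcop : IsCoprime e (c / g) := by
    rw [← EuclideanDomain.gcd_isUnit_iff]
    have h1 : g * EuclideanDomain.gcd e (c / g) ∣ g := by
      apply EuclideanDomain.dvd_gcd
      · have hh := mul_dvd_mul_left g (EuclideanDomain.gcd_dvd_right e (c / g))
        rwa [hcg] at hh
      · have hh := mul_dvd_mul_left g (EuclideanDomain.gcd_dvd_left e (c / g))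
        rwa [hfe] at hh
    have h2 : g * EuclideanDomain.gcd e (c / g) ∣ g * 1 := by rwa [mul_one]
    exact isUnit_of_dvd_one ((mul_dvd_mul_iff_left hg0).mp h2)
  have hDIV : ∀ v : Polynomial (ZMod 2), f ∣ c * v → e ∣ v := by
    intro v hv
    have h1 : g * e ∣ g * ((c / g) * v) := by
      rw [hfe, ← mul_assoc, hcg]
      exact hv
    exact hcop.dvd_of_dvd_mul_left ((mul_dvd_mul_iff_left hg0).mp h1)
  have hXg : IsCoprime (X ^ s : Polynomial (ZMod 2)) g := by
    apply IsCoprime.pow_left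
    rw [irreducible_X.coprime_iff_not_dvd]
    intro hXdvd
    have hXf : (X : Polynomial (ZMod 2)) ∣ f := hXdvd.trans hgf
    rw [X_dvd_iff] at hXf
    have : f.coeff 0 = 1 := by
      rw [hfdef, coeff_add, coeff_X_pow, coeff_one]
      simp [show ¬ ((0:ℕ) = L) by omega]
    rw [hXf] at this
    exact one_ne_zero this.symm
  set S := {w : Polynomial (ZMod 2) // w.degree < (L : WithBot ℕ) ∧
      ∀ k < L, (∀ t < n - 1, k ≠ (s + t) % L) →
        ((c * w) %ₘ (X ^ L + 1)).coeff k = 0} with hSdef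
  have hSne : Nonempty S := by
    refine ⟨⟨0, ?_, ?_⟩⟩
    · rw [degree_zero]; exact WithBot.bot_lt_coe L
    · intro k _ _
      rw [mul_zero, zero_modByMonic, coeff_zero]
  set χ : S → Polynomial (ZMod 2) := fun x =>
    ∑ t ∈ Finset.range (n - 1), monomial t (((c * x.1) %ₘ f).coeff ((s + t) % L)) with hχdef
  have hχdeg : ∀ x : S, (χ x).degree < ((n - 1 : ℕ) : WithBot ℕ) := by
    intro x
    refine lt_of_le_of_lt (degree_sum_le _ _) ?_
    rw [Finset.sup_lt_iff (WithBot.bot_lt_coe _)]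
    intro t ht
    refine lt_of_le_of_lt (degree_monomial_le _ _) ?_
    exact_mod_cast Finset.mem_range.mp ht
  have hkey : ∀ x : S, f ∣ c * x.1 - X ^ s * χ x := by
    intro x
    obtain ⟨w, hwdeg, hwout⟩ := x
    set r : Polynomial (ZMod 2) := (c * w) %ₘ f with hrdef
    have hrd : r.degree < (L : WithBot ℕ) := by
      rw [← hfd]
      exact degree_modByMonic_lt _ hfm
    have hrepr : r = ∑ t ∈ Finset.range (n - 1),
        monomial ((s + t) % L) (r.coeff ((s + t) % L)) := by
      ext k
      rw [finset_sum_coeff]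
      simp only [coeff_monomial]
      by_cases hk : ∃ t, t < n - 1 ∧ (s + t) % L = k
      · obtain ⟨t₀, ht₀, hk₀⟩ := hk
        rw [Finset.sum_eq_single t₀]
        · rw [if_pos hk₀, hk₀]
        · intro t ht hne
          rw [if_neg]
          intro heq
          exact hne (mod_window_inj hnL hn (Finset.mem_range.mp ht) ht₀ (heq.trans hk₀.symm))
        · intro h
          exact absurd (Finset.mem_range.mpr ht₀) h
      · push_neg at hk
        rw [Finset.sum_eq_zero]
        · by_cases hkL : k < L
          · exact hwout k hkL (fun t ht heq => (hk t ht) (heq.symm))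
          · exact coeff_eq_zero_of_degree_lt
              (lt_of_lt_of_le hrd (by exact_mod_cast Nat.le_of_not_lt hkL))
        · intro t ht
          rw [if_neg (hk t (Finset.mem_range.mp ht))]
    have hXsp : X ^ s * χ ⟨w, hwdeg, hwout⟩ = ∑ t ∈ Finset.range (n - 1),
        monomial (s + t) (r.coeff ((s + t) % L)) := by
      rw [hχdef, Finset.mul_sum]
      refine Finset.sum_congr rfl (fun t _ => ?_)
      rw [X_pow_eq_monomial, monomial_mul_monomial, one_mul]
    have h1 : f ∣ c * w - r := by
      rw [hrdef, modByMonic_eq_sub_mul_div _ f, sub_sub_cancel]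
      exact Dvd.intro _ rfl
    have h2 : f ∣ r - X ^ s * χ ⟨w, hwdeg, hwout⟩ := by
      rw [hXsp]
      nth_rewrite 1 [hrepr]
      rw [← Finset.sum_sub_distrib]
      apply Finset.dvd_sum
      intro t _
      rw [← C_mul_X_pow_eq_monomial, ← C_mul_X_pow_eq_monomial, ← mul_sub]
      apply Dvd.dvd.mul_left
      have hh := f_dvd_pow_sub L (s + t)
      rw [← dvd_neg] at hh
      simpa using hh
    have h3 := dvd_add h1 h2
    simpa [sub_add_sub_cancel] using h3
  have hgχ : ∀ x : S, g ∣ χ x := by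
    intro x
    have h1 : g ∣ c * x.1 := dvd_mul_of_dvd_left hgc _
    have h2 : g ∣ X ^ s * χ x := by
      have hh := dvd_sub h1 (hgf.trans (hkey x))
      simpa using hh
    exact (hXg.symm).dvd_of_dvd_mul_left h2
  have hχdet : ∀ x x' : S, χ x = χ x' → f ∣ c * (x.1 - x'.1) := by
    intro x x' hχeq
    have h1 := dvd_sub (hkey x) (hkey x')
    rw [hχeq] at h1
    have h2 : c * x.1 - X ^ s * χ x' - (c * x'.1 - X ^ s * χ x') = c * (x.1 - x'.1) := by
      ring
    rwa [h2] at h1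
  set P := {p : Polynomial (ZMod 2) // p.degree < ((n - 1 : ℕ) : WithBot ℕ) ∧ g ∣ p} with hPdef
  set U := {u : Polynomial (ZMod 2) // u.degree < ((d : ℕ) : WithBot ℕ)} with hUdef
  set χ' : S → P := fun x => ⟨χ x, hχdeg x, hgχ x⟩ with hχ'def
  set w₀ : P → S := Function.invFun χ' with hw₀def
  have hdvd_e : ∀ x : S, e ∣ (x.1 - (w₀ (χ' x)).1) := by
    intro x
    have hsame : χ' (w₀ (χ' x)) = χ' x := Function.invFun_eq ⟨x, rfl⟩
    have hχeq : χ (w₀ (χ' x)) = χ x := congrArg Subtype.val hsame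
    exact hDIV _ (hχdet x (w₀ (χ' x)) hχeq.symm)
  have hdeg_sub : ∀ x : S,
      (x.1 - (w₀ (χ' x)).1).degree < ((d + e.natDegree : ℕ) : WithBot ℕ) := by
    intro x
    have h1 : (x.1 - (w₀ (χ' x)).1).degree < (L : WithBot ℕ) :=
      lt_of_le_of_lt (degree_sub_le _ _) (max_lt x.2.1 (w₀ (χ' x)).2.1)
    have h2 : d + e.natDegree = L := by omega
    rwa [h2]
  set Θ : S → P × U := fun x =>
    (χ' x, ⟨(x.1 - (w₀ (χ' x)).1) / e, degree_div_lt' he0 (hdvd_e x) (hdeg_sub x)⟩) with hΘdef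
  have hΘinj : Function.Injective Θ := by
    intro x x' hxx
    have h1 : χ' x = χ' x' := congrArg Prod.fst hxx
    have h2 : (x.1 - (w₀ (χ' x)).1) / e = (x'.1 - (w₀ (χ' x')).1) / e :=
      congrArg Subtype.val (congrArg Prod.snd hxx)
    rw [← h1] at h2
    have h3 : e * ((x.1 - (w₀ (χ' x)).1) / e) = x.1 - (w₀ (χ' x)).1 :=
      EuclideanDomain.mul_div_cancel' he0 (hdvd_e x)
    have h4 : e * ((x'.1 - (w₀ (χ' x')).1) / e) = x'.1 - (w₀ (χ' x')).1 :=
      EuclideanDomain.mul_div_cancel' he0 (hdvd_e x')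
    rw [← h1] at h4
    rw [h2] at h3
    have h5 : x.1 - (w₀ (χ' x)).1 = x'.1 - (w₀ (χ' x)).1 := h3.symm.trans h4
    have h6 : x.1 = x'.1 := by
      have hh := congrArg (fun z => z + (w₀ (χ' x)).1) h5
      simpa using hh
    exact Subtype.ext h6
  have hfinP : Finite P := by
    have hfinbig : Finite {p : Polynomial (ZMod 2) //
        p.degree < ((n - 1 : ℕ) : WithBot ℕ)} := finite_degLT (n - 1)
    exact Finite.of_injective (fun p : P => (⟨p.1, p.2.1⟩ :
      {p : Polynomial (ZMod 2) // p.degree < ((n - 1 : ℕ) : WithBot ℕ)}))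
      (by intro p p' h
          have h' := congrArg Subtype.val h
          exact Subtype.ext h')
  have hfinU : Finite U := finite_degLT d
  have hcardU : Nat.card U = 2 ^ d := card_degLT d
  have hcardP : Nat.card P ≤ 2 ^ (n - 1 - d) := by
    have hfin' := finite_degLT (n - 1 - d)
    have hinj : Function.Injective (fun p : P =>
        (⟨p.1 / g, by
          apply degree_div_lt' hg0 p.2.2
          have h2 : (n - 1 - d) + d = n - 1 := by omega
          rw [h2]
          exact p.2.1⟩ :
          {u : Polynomial (ZMod 2) // u.degree < ((n - 1 - d : ℕ) : WithBot ℕ)})) := by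
      intro p p' h
      have h1 : p.1 / g = p'.1 / g := congrArg Subtype.val h
      have h2 : g * (p.1 / g) = p.1 := EuclideanDomain.mul_div_cancel' hg0 p.2.2
      have h3 : g * (p'.1 / g) = p'.1 := EuclideanDomain.mul_div_cancel' hg0 p'.2.2
      apply Subtype.ext
      rw [← h2, ← h3, h1]
    calc Nat.card P ≤ Nat.card {u : Polynomial (ZMod 2) //
          u.degree < ((n - 1 - d : ℕ) : WithBot ℕ)} := Nat.card_le_card_of_injective _ hinj
      _ = 2 ^ (n - 1 - d) := card_degLT _
  calc Nat.card S ≤ Nat.card (P × U) := Nat.card_le_card_of_injective Θ hΘinj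
    _ = Nat.card P * Nat.card U := Nat.card_prod _ _
    _ ≤ 2 ^ (n - 1 - d) * 2 ^ d := Nat.mul_le_mul hcardP (le_of_eq hcardU)
    _ = 2 ^ (n - 1) := by rw [← pow_add]; congr 1; omega

/-- Uniformity of Cyclic hashing after discarding n−1 consecutive (mod L) bits:
a not-all-zero combination ∑ qᵢ(x)·h₁(aᵢ) of independent uniform ring elements,
with deg qᵢ < n, agrees with y outside the discarded window with probability
2^(-(L-n+1)). -/
theorem cyclic_combination_outside_window_uniform
    {σ : Type*} [Fintype σ] (n L s : ℕ) (hnL : n ≤ L)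
    (q : Fin n → Polynomial (ZMod 2)) (hqdeg : ∀ i, (q i).degree < (n : WithBot ℕ))
    (hq : ∃ i, q i ≠ 0) (a : Fin n → σ) (ha : Function.Injective a)
    (y : Polynomial (ZMod 2)) :
    prob (σ → {w : Polynomial (ZMod 2) // w.degree < (L : WithBot ℕ)})
      (fun h₁ => ∀ k < L, (∀ t < n - 1, k ≠ (s + t) % L) →
        ((∑ i : Fin n, q i * (h₁ (a i)).val) %ₘ ((X : Polynomial (ZMod 2)) ^ L + 1)).coeff k
          = y.coeff k)
      = 1 / 2 ^ (L - n + 1) := by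
  classical
  simp only [prob]
  obtain ⟨i₀, hi₀⟩ := hq
  have hn : 1 ≤ n := Fin.pos i₀
  have hL : 1 ≤ L := hn.trans hnL
  set f : Polynomial (ZMod 2) := X ^ L + 1 with hfdef
  set c : Polynomial (ZMod 2) := q i₀ with hcdef
  haveI hfinV : Finite (↥(degreeLT (ZMod 2) L)) :=
    Finite.of_equiv _ (Polynomial.degreeLTEquiv (ZMod 2) L).toEquiv.symm
  -- the additive homomorphisms
  let ψf : ↥(degreeLT (ZMod 2) L) →
      ({k : Fin L // ∀ t < n - 1, (k : ℕ) ≠ (s + t) % L} → ZMod 2) := fun w k =>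
    ((c * (w : Polynomial (ZMod 2))) %ₘ f).coeff ((k : Fin L) : ℕ)
  have hψadd : ∀ w w', ψf (w + w') = ψf w + ψf w' := by
    intro w w'
    funext k
    show ((c * ((w + w' : ↥(degreeLT (ZMod 2) L)) : Polynomial (ZMod 2))) %ₘ f).coeff _
      = ((c * (w : Polynomial (ZMod 2))) %ₘ f).coeff _
        + ((c * (w' : Polynomial (ZMod 2))) %ₘ f).coeff _
    rw [Submodule.coe_add, mul_add, add_modByMonic, coeff_add]
  let ψ : ↥(degreeLT (ZMod 2) L) →+
      ({k : Fin L // ∀ t < n - 1, (k : ℕ) ≠ (s + t) % L} → ZMod 2) :=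
    AddMonoidHom.mk' ψf hψadd
  let Φf : (σ → ↥(degreeLT (ZMod 2) L)) →
      ({k : Fin L // ∀ t < n - 1, (k : ℕ) ≠ (s + t) % L} → ZMod 2) := fun h k =>
    ((∑ i : Fin n, q i * ((h (a i) : Polynomial (ZMod 2)))) %ₘ f).coeff ((k : Fin L) : ℕ)
  have hΦadd : ∀ h h', Φf (h + h') = Φf h + Φf h' := by
    intro h h'
    funext k
    show ((∑ i : Fin n, q i * (((h + h') (a i) : Polynomial (ZMod 2)))) %ₘ f).coeff _
      = ((∑ i : Fin n, q i * ((h (a i) : Polynomial (ZMod 2)))) %ₘ f).coeff _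
        + ((∑ i : Fin n, q i * ((h' (a i) : Polynomial (ZMod 2)))) %ₘ f).coeff _
    have hs : (∑ i : Fin n, q i * (((h + h') (a i) : Polynomial (ZMod 2))))
        = (∑ i : Fin n, q i * ((h (a i) : Polynomial (ZMod 2))))
          + (∑ i : Fin n, q i * ((h' (a i) : Polynomial (ZMod 2)))) := by
      rw [← Finset.sum_add_distrib]
      refine Finset.sum_congr rfl (fun i _ => ?_)
      show q i * ((h (a i) + h' (a i) : ↥(degreeLT (ZMod 2) L)) : Polynomial (ZMod 2)) = _
      rw [Submodule.coe_add, mul_add]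
    rw [hs, add_modByMonic, coeff_add]
  let Φ : (σ → ↥(degreeLT (ZMod 2) L)) →+
      ({k : Fin L // ∀ t < n - 1, (k : ℕ) ≠ (s + t) % L} → ZMod 2) :=
    AddMonoidHom.mk' Φf hΦadd
  -- cardinalities
  have hcardV : Nat.card (↥(degreeLT (ZMod 2) L)) = 2 ^ L := by
    rw [Nat.card_congr (Polynomial.degreeLTEquiv (ZMod 2) L).toEquiv,
      Nat.card_eq_fintype_card]
    simp
  have hcardCompl :
      Nat.card {k : Fin L // ¬ (∀ t < n - 1, (k : ℕ) ≠ (s + t) % L)} = n - 1 := by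
    have hbij : Function.Bijective (fun t : Fin (n - 1) =>
        (⟨⟨(s + t) % L, Nat.mod_lt _ (by omega)⟩, by
          push_neg
          exact ⟨t.1, t.2, rfl⟩⟩ :
          {k : Fin L // ¬ (∀ t < n - 1, (k : ℕ) ≠ (s + t) % L)})) := by
      constructor
      · intro t t' h
        have h1 : (s + (t : ℕ)) % L = (s + (t' : ℕ)) % L := by
          have h2 := congrArg (fun z : {k : Fin L //
            ¬ (∀ t < n - 1, (k : ℕ) ≠ (s + t) % L)} => ((z : Fin L) : ℕ)) h
          simpa using h2
        exact Fin.ext (mod_window_inj hnL hn t.2 t'.2 h1)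
      · rintro ⟨k, hk⟩
        push_neg at hk
        obtain ⟨t, ht, hkt⟩ := hk
        refine ⟨⟨t, ht⟩, ?_⟩
        apply Subtype.ext
        apply Fin.ext
        exact hkt.symm
    calc Nat.card {k : Fin L // ¬ (∀ t < n - 1, (k : ℕ) ≠ (s + t) % L)}
        = Nat.card (Fin (n - 1)) := (Nat.card_congr (Equiv.ofBijective _ hbij)).symm
      _ = n - 1 := by simp
  have hcardOut : Nat.card {k : Fin L // ∀ t < n - 1, (k : ℕ) ≠ (s + t) % L}
      = L - n + 1 := by
    have e1 : {k : Fin L // ∀ t < n - 1, (k : ℕ) ≠ (s + t) % L} ≃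
        {k : Fin L // ¬ ¬ (∀ t < n - 1, (k : ℕ) ≠ (s + t) % L)} :=
      Equiv.subtypeEquivRight (fun k => (not_not).symm)
    rw [Nat.card_congr e1, Nat.card_eq_fintype_card, Fintype.card_subtype_compl]
    rw [← Nat.card_eq_fintype_card (α := {k : Fin L // ¬ (∀ t < n - 1, (k : ℕ) ≠ (s + t) % L)})]
    rw [hcardCompl, Fintype.card_fin]
    omega
  have hcardN : Nat.card ({k : Fin L // ∀ t < n - 1, (k : ℕ) ≠ (s + t) % L} → ZMod 2)
      = 2 ^ (L - n + 1) := by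
    rw [Nat.card_fun, hcardOut, Nat.card_eq_fintype_card, ZMod.card]
  -- kernel bound for ψ
  have hkerψ : Nat.card {w : ↥(degreeLT (ZMod 2) L) // ψ w = 0} ≤ 2 ^ (n - 1) := by
    have hEq : {w : ↥(degreeLT (ZMod 2) L) // ψ w = 0} ≃
        {w : Polynomial (ZMod 2) // w.degree < (L : WithBot ℕ) ∧
          ∀ k < L, (∀ t < n - 1, k ≠ (s + t) % L) →
            ((c * w) %ₘ ((X : Polynomial (ZMod 2)) ^ L + 1)).coeff k = 0} :=
      { toFun := fun x => ⟨x.1.1, mem_degreeLT.mp x.1.2, by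
          intro k hk hout
          exact congrFun x.2 ⟨⟨k, hk⟩, hout⟩⟩
        invFun := fun x => ⟨⟨x.1, mem_degreeLT.mpr x.2.1⟩, by
          funext k
          exact x.2.2 k.1.1 k.1.2 k.2⟩
        left_inv := fun x => by
          apply Subtype.ext
          apply Subtype.ext
          rfl
        right_inv := fun x => by
          apply Subtype.ext
          rfl }
    rw [Nat.card_congr hEq]
    exact ker_card_le n L s hnL hn c hi₀ (hqdeg i₀)
  -- surjectivity of ψ
  have hsurjψ : Function.Surjective ψ := by
    apply surj_of_card_le
    calc Nat.card {w : ↥(degreeLT (ZMod 2) L) // ψ w = 0}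
          * Nat.card ({k : Fin L // ∀ t < n - 1, (k : ℕ) ≠ (s + t) % L} → ZMod 2)
        ≤ 2 ^ (n - 1) * 2 ^ (L - n + 1) := by
          rw [hcardN]
          exact Nat.mul_le_mul_right _ hkerψ
      _ = 2 ^ L := by rw [← pow_add]; congr 1; omega
      _ = Nat.card (↥(degreeLT (ZMod 2) L)) := hcardV.symm
  -- surjectivity of Φ
  have hsurjΦ : Function.Surjective Φ := by
    intro t
    obtain ⟨w', hw'⟩ := hsurjψ t
    refine ⟨Function.update (0 : σ → ↥(degreeLT (ZMod 2) L)) (a i₀) w', ?_⟩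
    have hsum : (∑ i : Fin n, q i *
        ((Function.update (0 : σ → ↥(degreeLT (ZMod 2) L)) (a i₀) w' (a i) :
          Polynomial (ZMod 2)))) = c * (w' : Polynomial (ZMod 2)) := by
      rw [Finset.sum_eq_single i₀]
      · rw [Function.update_self, hcdef]
      · intro i _ hne
        rw [Function.update_of_ne (fun hh => hne (ha hh))]
        show q i * ((0 : ↥(degreeLT (ZMod 2) L)) : Polynomial (ZMod 2)) = 0
        rw [ZeroMemClass.coe_zero, mul_zero]
      · intro h
        exact absurd (Finset.mem_univ i₀) h
    funext k
    show ((∑ i : Fin n, q i *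
        ((Function.update (0 : σ → ↥(degreeLT (ZMod 2) L)) (a i₀) w' (a i) :
          Polynomial (ZMod 2)))) %ₘ f).coeff ((k : Fin L) : ℕ) = t k
    rw [hsum]
    exact congrFun hw' k
  -- transfer the event
  set t₀ : ({k : Fin L // ∀ t < n - 1, (k : ℕ) ≠ (s + t) % L} → ZMod 2) :=
    fun k => y.coeff ((k : Fin L) : ℕ) with ht₀def
  let eΩ : (σ → {w : Polynomial (ZMod 2) // w.degree < (L : WithBot ℕ)}) ≃
      (σ → ↥(degreeLT (ZMod 2) L)) :=
    Equiv.piCongrRight (fun _ => Equiv.subtypeEquivRight (fun w => mem_degreeLT.symm))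
  have hevent : Nat.card {ω : σ → {w : Polynomial (ZMod 2) // w.degree < (L : WithBot ℕ)} //
        ∀ k < L, (∀ t < n - 1, k ≠ (s + t) % L) →
          ((∑ i : Fin n, q i * (ω (a i)).val) %ₘ f).coeff k = y.coeff k}
      = Nat.card {m : σ → ↥(degreeLT (ZMod 2) L) // Φ m = t₀} := by
    apply Nat.card_congr
    refine Equiv.subtypeEquiv eΩ ?_
    intro ω
    constructor
    · intro hω
      funext k
      exact hω k.1.1 k.1.2 k.2
    · intro hΦ k hk hout
      exact congrFun hΦ ⟨⟨k, hk⟩, hout⟩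
  have hfiber := card_fiber_of_surj Φ hsurjΦ t₀
  have hΩcard : Nat.card (σ → {w : Polynomial (ZMod 2) // w.degree < (L : WithBot ℕ)})
      = Nat.card (σ → ↥(degreeLT (ZMod 2) L)) := Nat.card_congr eΩ
  have hM_pos : 0 < Nat.card (σ → ↥(degreeLT (ZMod 2) L)) := Nat.card_pos
  rw [hevent, hΩcard, ← hfiber, hcardN]
  have hF : 0 < Nat.card {m : σ → ↥(degreeLT (ZMod 2) L) // Φ m = t₀} := by
    rcases Nat.eq_zero_or_pos (Nat.card {m : σ → ↥(degreeLT (ZMod 2) L) // Φ m = t₀})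
      with h0 | hpos
    · rw [h0, zero_mul] at hfiber
      rw [← hfiber] at hM_pos
      exact absurd hM_pos (lt_irrefl 0)
    · exact hpos
  have hFQ : (0 : ℚ) < (Nat.card {m : σ → ↥(degreeLT (ZMod 2) L) // Φ m = t₀} : ℚ) := by
    exact_mod_cast hF
  push_cast
  rw [div_eq_div_iff (by positivity) (by positivity)]
  ring
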